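/- arXiv:1302.0615 — 5 statements merged into one kernel-verified Lean document; each statement's English description precedes it below -/
import Mathlib

section
/- Suppose r : ℕ × ℤ × ℤ → ℚ satisfies r(n,i,j) = 0 whenever i ∉ {0,…,n−1} or j ∉ {0,…,n−1}, and for all n ≥ 1 and all 0 ≤ i,j ≤ n−1, r(n,i,j) = (1/2) · Σ_{k,l ∈ {0,1}} r(n−1, i−k, j−l) + (1/2)·(1 if (i,j) = (0,0), else 0). Then for all n ≥ 0 and all 0 ≤ i,j ≤ n−1, r(n,i,j) = (1/2) · Σ_{m=0}^{n−1} 2^{−m} · binom(m,i) · binom(m,j), where binom denotes the binomial coefficient. -/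
open Finset

/-- Integer-indexed binomial coefficient (zero for negative lower index). -/
def cc (i : ℤ) (m : ℕ) : ℚ := if 0 ≤ i then (m.choose i.toNat : ℚ) else 0

/-- Closed-form candidate. -/
def G (n : ℕ) (i j : ℤ) : ℚ :=
  (1/2) * ∑ m ∈ Finset.range n, ((2:ℚ)^m)⁻¹ * (cc i m) * (cc j m)

lemma cc_pascal (i : ℤ) (hi : 0 ≤ i) (m : ℕ) :
    cc i (m+1) = cc i m + cc (i-1) m := by
  rcases eq_or_lt_of_le hi with h | h
  · simp [cc, ← h]
  · have h1 : (0:ℤ) ≤ i - 1 := by omega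
    have h2 : i.toNat = (i-1).toNat + 1 := by omega
    simp only [cc, if_pos hi, if_pos h1, h2, Nat.choose_succ_succ]
    push_cast; ring

lemma cc_zero_of_ge (i : ℤ) (m n : ℕ) (hm : m < n) (h : (n:ℤ) ≤ i) : cc i m = 0 := by
  have hi : (0:ℤ) ≤ i := by omega
  have : m < i.toNat := by omega
  simp [cc, hi, Nat.choose_eq_zero_of_lt this]

lemma G_zero_left (n : ℕ) (i j : ℤ) (h : i < 0 ∨ (n:ℤ) ≤ i) : G n i j = 0 := by
  have hs : ∑ m ∈ Finset.range n, ((2:ℚ)^m)⁻¹ * (cc i m) * (cc j m) = 0 := by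
    refine Finset.sum_eq_zero fun m hm => ?_
    rcases h with h | h
    · simp [cc, not_le.2 h]
    · rw [cc_zero_of_ge i m n (Finset.mem_range.mp hm) h]; ring
  simp [G, hs]

lemma G_zero_right (n : ℕ) (i j : ℤ) (h : j < 0 ∨ (n:ℤ) ≤ j) : G n i j = 0 := by
  have hs : ∑ m ∈ Finset.range n, ((2:ℚ)^m)⁻¹ * (cc i m) * (cc j m) = 0 := by
    refine Finset.sum_eq_zero fun m hm => ?_
    rcases h with h | h
    · simp [cc, not_le.2 h]
    · rw [cc_zero_of_ge j m n (Finset.mem_range.mp hm) h]; ring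
  simp [G, hs]

lemma cc_at_zero (i : ℤ) (hi : 0 ≤ i) : cc i 0 = if i = 0 then 1 else 0 := by
  rcases eq_or_lt_of_le hi with h | h
  · simp [cc, ← h]
  · have h0 : i.toNat ≠ 0 := by omega
    rw [if_neg (by omega : ¬ i = 0)]
    simp [cc, hi, Nat.choose_eq_zero_of_lt (Nat.pos_of_ne_zero h0)]

lemma G_step (n : ℕ) (i j : ℤ) (hi : 0 ≤ i) (hj : 0 ≤ j) :
    G (n+1) i j =
      (1/2) * (∑ k ∈ Finset.range 2, ∑ l ∈ Finset.range 2, G n (i - k) (j - l))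
        + (1/2) * (if (i, j) = (0, 0) then 1 else 0) := by
  have hsum : (∑ k ∈ Finset.range 2, ∑ l ∈ Finset.range 2, G n (i - k) (j - l))
      = (1/2) * ∑ m ∈ Finset.range n,
          ((2:ℚ)^m)⁻¹ * (cc i (m+1)) * (cc j (m+1)) := by
    simp only [Finset.sum_range_succ, Finset.sum_range_zero, zero_add]
    push_cast
    simp only [G, sub_zero]
    have expand : ∑ m ∈ Finset.range n, ((2:ℚ)^m)⁻¹ * cc i (m+1) * cc j (m+1)
        = ∑ m ∈ Finset.range n, (((2:ℚ)^m)⁻¹ * cc i m * cc j m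
            + ((2:ℚ)^m)⁻¹ * cc i m * cc (j-1) m
            + ((2:ℚ)^m)⁻¹ * cc (i-1) m * cc j m
            + ((2:ℚ)^m)⁻¹ * cc (i-1) m * cc (j-1) m) := by
      refine Finset.sum_congr rfl fun m _ => ?_
      rw [cc_pascal i hi m, cc_pascal j hj m]
      ring
    rw [expand]
    simp only [Finset.sum_add_distrib]
    ring
  rw [hsum, G, Finset.sum_range_succ']
  have hf0 : cc i 0 * cc j 0 = (if (i, j) = (0, 0) then 1 else 0) := by
    rw [cc_at_zero i hi, cc_at_zero j hj]
    by_cases h1 : i = 0 <;> by_cases h2 : j = 0 <;> simp [h1, h2, Prod.ext_iff]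
  have : ∀ m : ℕ, ((2:ℚ)^(m+1))⁻¹ * (cc i (m+1)) * (cc j (m+1))
      = (1/2) * (((2:ℚ)^m)⁻¹ * (cc i (m+1)) * (cc j (m+1))) := by
    intro m
    rw [pow_succ, mul_inv]
    ring
  rw [Finset.sum_congr rfl fun m _ => this m, ← Finset.mul_sum]
  simp only [pow_zero, inv_one, one_mul]
  rw [hf0]
  ring

theorem r_eq_G (r : ℕ → ℤ → ℤ → ℚ)
    (hzero : ∀ (n : ℕ) (i j : ℤ),
      ¬(0 ≤ i ∧ i ≤ (n : ℤ) - 1) ∨ ¬(0 ≤ j ∧ j ≤ (n : ℤ) - 1) → r n i j = 0)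
    (hrec : ∀ (n : ℕ), 1 ≤ n → ∀ (i j : ℤ),
      0 ≤ i → i ≤ (n : ℤ) - 1 → 0 ≤ j → j ≤ (n : ℤ) - 1 →
      r n i j =
        (1 / 2) * (∑ k ∈ Finset.range 2, ∑ l ∈ Finset.range 2, r (n - 1) (i - k) (j - l))
        + (1 / 2) * (if (i, j) = (0, 0) then 1 else 0)) :
    ∀ (n : ℕ) (i j : ℤ), r n i j = G n i j := by
  intro n
  induction n with
  | zero =>
    intro i j
    rw [hzero 0 i j (by left; push_cast; omega)]
    simp [G]
  | succ n ih =>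
    intro i j
    by_cases hi : 0 ≤ i ∧ i ≤ (n:ℤ)
    · by_cases hj : 0 ≤ j ∧ j ≤ (n:ℤ)
      · have h := hrec (n+1) (by omega) i j hi.1 (by push_cast; omega) hj.1
          (by push_cast; omega)
        simp only [Nat.add_sub_cancel] at h
        rw [h, G_step n i j hi.1 hj.1]
        congr 2
        refine Finset.sum_congr rfl fun k _ => Finset.sum_congr rfl fun l _ => ih _ _
      · rw [hzero (n+1) i j (by right; push_cast; omega),
          G_zero_right (n+1) i j (by push_cast; omega)]
    · rw [hzero (n+1) i j (by left; push_cast; omega),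
        G_zero_left (n+1) i j (by push_cast; omega)]

/-- The boundary recurrence for the ratios `Z(i,j,n)/Z_n` of the
uniformly weighted Aztec diamond has the closed-form solution
`r(n,i,j) = (1/2) · Σ_{m=0}^{n−1} 2^{−m} · C(m,i) · C(m,j)`. -/
theorem aztec_uniform_boundary_recurrence_solution (r : ℕ → ℤ → ℤ → ℚ)
    (hzero : ∀ (n : ℕ) (i j : ℤ),
      ¬(0 ≤ i ∧ i ≤ (n : ℤ) - 1) ∨ ¬(0 ≤ j ∧ j ≤ (n : ℤ) - 1) → r n i j = 0)
    (hrec : ∀ (n : ℕ), 1 ≤ n → ∀ (i j : ℤ),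
      0 ≤ i → i ≤ (n : ℤ) - 1 → 0 ≤ j → j ≤ (n : ℤ) - 1 →
      r n i j =
        (1 / 2) * (∑ k ∈ Finset.range 2, ∑ l ∈ Finset.range 2, r (n - 1) (i - k) (j - l))
        + (1 / 2) * (if (i, j) = (0, 0) then 1 else 0)) :
    ∀ (n : ℕ) (i j : ℤ), 0 ≤ i → i ≤ (n : ℤ) - 1 → 0 ≤ j → j ≤ (n : ℤ) - 1 →
      r n i j =
        (1 / 2) * ∑ m ∈ Finset.range n,
          ((2 : ℚ) ^ m)⁻¹ * (m.choose i.toNat) * (m.choose j.toNat) := by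
  intro n i j hi1 hi2 hj1 hj2
  rw [r_eq_G r hzero hrec n i j]
  simp [G, cc, hi1, hj1]
end

section
/- Let a be a complex number with 1 + a² ≠ 0. Suppose r : ℕ × ℤ × ℤ → ℂ satisfies r(n,i,j) = 0 whenever i ∉ {0,…,n−1} or j ∉ {0,…,n−1}, and for all n ≥ 1 and all 0 ≤ i,j ≤ n−1, r(n,i,j) = (1/(1+a²)) · Σ_{k,l ∈ {0,1}} a^{k+l} · r(n−1, i−k, j−l) + (a/(1+a²)) · (1 if (i,j) = (0,0), else 0). Then for all n ≥ 0 and all 0 ≤ i,j ≤ n−1, r(n,i,j) = (a^{1+i+j}/(1+a²)) · Σ_{m=0}^{n−1} binom(m,i) · binom(m,j) · (1+a²)^{−m}. -/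
/-- Auxiliary "shifted choose": `cch 0 m s = C(m,s)` and
`cch 1 m s = C(m, s-1)` with the convention that it is `0` when `s = 0`. -/
noncomputable def cch (k m s : ℕ) : ℂ :=
  if k = 0 then (m.choose s : ℂ) else if s = 0 then 0 else (m.choose (s - 1) : ℂ)

lemma pascal_cch (m s : ℕ) : ((m + 1).choose s : ℂ) = cch 0 m s + cch 1 m s := by
  cases s with
  | zero => simp [cch]
  | succ u =>
    simp only [cch, if_pos rfl, if_neg (Nat.succ_ne_zero u), Nat.succ_sub_one,
      Nat.choose_succ_succ (n := m) (k := u)]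
    push_cast
    ring

/-- The boundary recurrence for the ratios `Z(i,j,a,n)/Z_n(a)` of the
one-periodic (bias `a`) Aztec diamond has the closed-form solution
`r(n,i,j) = (a^{1+i+j}/(1+a²)) · Σ_{m=0}^{n−1} C(m,i)·C(m,j)·(1+a²)^{−m}`. -/
theorem aztec_biased_boundary_recurrence_solution (a : ℂ) (ha : 1 + a ^ 2 ≠ 0)
    (r : ℕ → ℤ → ℤ → ℂ)
    (hzero : ∀ (n : ℕ) (i j : ℤ),
      ¬(0 ≤ i ∧ i ≤ (n : ℤ) - 1) ∨ ¬(0 ≤ j ∧ j ≤ (n : ℤ) - 1) → r n i j = 0)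
    (hrec : ∀ (n : ℕ), 1 ≤ n → ∀ (i j : ℤ),
      0 ≤ i → i ≤ (n : ℤ) - 1 → 0 ≤ j → j ≤ (n : ℤ) - 1 →
      r n i j =
        (1 / (1 + a ^ 2)) *
          (∑ k ∈ Finset.range 2, ∑ l ∈ Finset.range 2,
            a ^ (k + l) * r (n - 1) (i - k) (j - l))
        + (a / (1 + a ^ 2)) * (if (i, j) = (0, 0) then 1 else 0)) :
    ∀ (n : ℕ) (i j : ℤ), 0 ≤ i → i ≤ (n : ℤ) - 1 → 0 ≤ j → j ≤ (n : ℤ) - 1 →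
      r n i j =
        (a ^ (1 + i + j) / (1 + a ^ 2)) *
          ∑ m ∈ Finset.range n,
            (m.choose i.toNat : ℂ) * (m.choose j.toNat) * ((1 + a ^ 2) ^ m)⁻¹ := by
  suffices H : ∀ (n : ℕ) (i j : ℤ), 0 ≤ i → 0 ≤ j →
      r n i j =
        (a ^ (1 + i + j) / (1 + a ^ 2)) *
          ∑ m ∈ Finset.range n,
            (m.choose i.toNat : ℂ) * (m.choose j.toNat) * ((1 + a ^ 2) ^ m)⁻¹ by
    intro n i j hi _ hj _
    exact H n i j hi hj
  intro n
  induction n with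
  | zero =>
    intro i j hi hj
    rw [hzero 0 i j (Or.inl (by omega))]
    simp
  | succ n ih =>
    intro i j hi hj
    by_cases hir : i ≤ (n : ℤ)
    · by_cases hjr : j ≤ (n : ℤ)
      · -- in range
        lift i to ℕ using hi with p
        lift j to ℕ using hj with q
        have hp : p ≤ n := by exact_mod_cast hir
        have hq : q ≤ n := by exact_mod_cast hjr
        have hterm : ∀ k l : ℕ, k ≤ 1 → l ≤ 1 →
            a ^ (k + l) * r n ((p : ℤ) - k) ((q : ℤ) - l) =
              (a ^ (1 + p + q) / (1 + a ^ 2)) *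
                ∑ m ∈ Finset.range n, cch k m p * cch l m q * ((1 + a ^ 2) ^ m)⁻¹ := by
          intro k l hk hl
          by_cases hkp : k = 1 ∧ p = 0
          · obtain ⟨rfl, rfl⟩ := hkp
            rw [hzero n _ _ (Or.inl (by omega))]
            rw [Finset.sum_eq_zero fun m _ => by simp [cch]]
            simp
          · by_cases hlq : l = 1 ∧ q = 0
            · obtain ⟨rfl, rfl⟩ := hlq
              rw [hzero n _ _ (Or.inr (by omega))]
              rw [Finset.sum_eq_zero fun m _ => by simp [cch]]
              simp
            · have hik : (0 : ℤ) ≤ (p : ℤ) - k := by omega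
              have hjl : (0 : ℤ) ≤ (q : ℤ) - l := by omega
              rw [ih _ _ hik hjl]
              have e1 : (1 : ℤ) + ((p : ℤ) - k) + ((q : ℤ) - l)
                  = ((1 + p + q - k - l : ℕ) : ℤ) := by omega
              have e2 : ((p : ℤ) - k).toNat = p - k := by omega
              have e3 : ((q : ℤ) - l).toNat = q - l := by omega
              rw [e1, e2, e3, zpow_natCast]
              have hc1 : ∀ m : ℕ, (m.choose (p - k) : ℂ) = cch k m p := by
                intro m
                interval_cases k
                · simp [cch]
                · simp only [cch, if_neg one_ne_zero]
                  rw [if_neg (by omega)]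
              have hc2 : ∀ m : ℕ, (m.choose (q - l) : ℂ) = cch l m q := by
                intro m
                interval_cases l
                · simp [cch]
                · simp only [cch, if_neg one_ne_zero]
                  rw [if_neg (by omega)]
              have hpow : a ^ (k + l) * a ^ (1 + p + q - k - l) = a ^ (1 + p + q) := by
                rw [← pow_add]
                congr 1
                omega
              calc a ^ (k + l) * (a ^ (1 + p + q - k - l) / (1 + a ^ 2) *
                    ∑ m ∈ Finset.range n,
                      (m.choose (p - k) : ℂ) * (m.choose (q - l)) * ((1 + a ^ 2) ^ m)⁻¹)
                  = (a ^ (k + l) * a ^ (1 + p + q - k - l)) / (1 + a ^ 2) *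
                    ∑ m ∈ Finset.range n,
                      (m.choose (p - k) : ℂ) * (m.choose (q - l)) * ((1 + a ^ 2) ^ m)⁻¹ := by
                    ring
                _ = _ := by
                    rw [hpow]
                    congr 1
                    refine Finset.sum_congr rfl fun m _ => ?_
                    rw [hc1, hc2]
        rw [hrec (n + 1) (by omega) p q (by positivity) (by push_cast; omega)
          (by positivity) (by push_cast; omega)]
        conv_rhs => rw [Finset.sum_range_succ']
        simp only [Finset.sum_range_succ, Finset.sum_range_one, Finset.sum_range_zero,
          Nat.add_sub_cancel, zero_add]
        rw [hterm 0 0 (by omega) (by omega), hterm 0 1 (by omega) (by omega),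
          hterm 1 0 (by omega) (by omega), hterm 1 1 (by omega) (by omega)]
        have etn1 : ((p : ℤ)).toNat = p := by omega
        have etn2 : ((q : ℤ)).toNat = q := by omega
        have ezp : (a : ℂ) ^ ((1 : ℤ) + (p : ℤ) + (q : ℤ)) = a ^ (1 + p + q) := by
          rw [show (1 : ℤ) + (p : ℤ) + (q : ℤ) = ((1 + p + q : ℕ) : ℤ) by omega,
            zpow_natCast]
        rw [etn1, etn2, ezp]
        have split : ∑ m ∈ Finset.range n,
            (((m + 1).choose p : ℂ)) * (((m + 1).choose q : ℂ)) * ((1 + a ^ 2) ^ (m + 1))⁻¹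
            = (1 + a ^ 2)⁻¹ *
              ((∑ m ∈ Finset.range n, cch 0 m p * cch 0 m q * ((1 + a ^ 2) ^ m)⁻¹)
               + (∑ m ∈ Finset.range n, cch 0 m p * cch 1 m q * ((1 + a ^ 2) ^ m)⁻¹)
               + (∑ m ∈ Finset.range n, cch 1 m p * cch 0 m q * ((1 + a ^ 2) ^ m)⁻¹)
               + (∑ m ∈ Finset.range n, cch 1 m p * cch 1 m q * ((1 + a ^ 2) ^ m)⁻¹)) := by
          rw [← Finset.sum_add_distrib, ← Finset.sum_add_distrib, ← Finset.sum_add_distrib,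
            Finset.mul_sum]
          refine Finset.sum_congr rfl fun m _ => ?_
          rw [pascal_cch m p, pascal_cch m q, pow_succ, mul_inv]
          ring
        rw [split]
        by_cases hpq : p = 0 ∧ q = 0
        · obtain ⟨rfl, rfl⟩ := hpq
          simp only [Nat.choose_self, Nat.cast_one, pow_zero, inv_one, Nat.choose_zero_right]
          norm_num [Prod.ext_iff]
          ring
        · have hδ1 : ((Nat.choose 0 p : ℂ)) * ((Nat.choose 0 q : ℂ)) = 0 := by
            rcases Nat.eq_zero_or_pos p with hp0 | hp0
            · rcases Nat.eq_zero_or_pos q with hq0 | hq0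
              · exact absurd ⟨hp0, hq0⟩ hpq
              · rw [Nat.choose_eq_zero_of_lt hq0]; simp
            · rw [Nat.choose_eq_zero_of_lt hp0]; simp
          have hδ2 : (if ((p : ℤ), (q : ℤ)) = ((0 : ℤ), (0 : ℤ)) then (1 : ℂ) else 0) = 0 := by
            rw [if_neg]
            simp only [Prod.mk.injEq, Nat.cast_eq_zero]
            omega
          rw [hδ1, hδ2]
          ring
      · -- j out of range
        rw [hzero (n + 1) i j (Or.inr (by omega))]
        symm
        rw [Finset.sum_eq_zero, mul_zero]
        intro m hm
        simp only [Finset.mem_range] at hm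
        have h1 : m < j.toNat := by omega
        rw [Nat.choose_eq_zero_of_lt h1]
        simp
    · -- i out of range
      rw [hzero (n + 1) i j (Or.inl (by omega))]
      symm
      rw [Finset.sum_eq_zero, mul_zero]
      intro m hm
      simp only [Finset.mem_range] at hm
      have h1 : m < i.toNat := by omega
      rw [Nat.choose_eq_zero_of_lt h1]
      simp
end

section
/- Let n ≥ 1, let a > 0 be real, let K_a be the one-periodic Kasteleyn matrix of the Aztec diamond AD_n, and suppose L : W_n × B_n → ℂ satisfies Σ_{w∈W_n} K_a(b,w)·L(w,b′) = (1 if b = b′, else 0) for all b,b′ ∈ B_n and Σ_{b∈B_n} L(w,b)·K_a(b,w′) = (1 if w = w′, else 0) for all w,w′ ∈ W_n. Then for all 0 ≤ i,j ≤ n−1, L((2i+1,0),(0,2j+1)) = −𝚒^{i+j+1} · (a^{1+i+j}/(1+a²)) · Σ_{m=0}^{n−1} binom(m,i) · binom(m,j) · (1+a²)^{−m}. -/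
open Finset

noncomputable def aztecWhite (m : ℕ) : Finset (ℤ × ℤ) :=
  (Finset.Icc (0 : ℤ) (2 * (m : ℤ)) ×ˢ Finset.Icc (0 : ℤ) (2 * (m : ℤ))).filter
    fun p => p.1 % 2 = 1 ∧ p.2 % 2 = 0 ∧ 1 ≤ p.1 ∧ p.1 ≤ 2 * (m : ℤ) - 1 ∧
      0 ≤ p.2 ∧ p.2 ≤ 2 * (m : ℤ)

noncomputable def aztecBlack (m : ℕ) : Finset (ℤ × ℤ) :=
  (Finset.Icc (0 : ℤ) (2 * (m : ℤ)) ×ˢ Finset.Icc (0 : ℤ) (2 * (m : ℤ))).filter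
    fun p => p.1 % 2 = 0 ∧ p.2 % 2 = 1 ∧ 0 ≤ p.1 ∧ p.1 ≤ 2 * (m : ℤ) ∧
      1 ≤ p.2 ∧ p.2 ≤ 2 * (m : ℤ) - 1

/-- The one-periodic Kasteleyn matrix of the Aztec diamond: `1` on edges in direction
`±e1`, `a·𝚒` on edges in direction `±e2`, `0` otherwise. -/
noncomputable def Kbias (a : ℝ) (b w : ℤ × ℤ) : ℂ :=
  if b - w = (1, 1) ∨ b - w = (-1, -1) then 1
  else if b - w = (-1, 1) ∨ b - w = (1, -1) then (a : ℂ) * Complex.I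
  else 0

/-! Auxiliary definitions -/

noncomputable def ccA (a : ℝ) : ℂ := (a : ℂ) * Complex.I

noncomputable def bbA (a : ℝ) : ℂ := 1 - ccA a ^ 2

noncomputable def TT (n j q m : ℕ) : ℂ :=
  ∑ k ∈ Finset.range (q + 1),
    if m + k < n then (-1 : ℂ) ^ k * (q.choose k) * ((m + k).choose j) else 0

noncomputable def gamA (n j : ℕ) (a : ℝ) (q m : ℕ) : ℂ :=
  -(ccA a) ^ (j + 1) * (-(ccA a)⁻¹) ^ q * ((bbA a) ^ (m + 1))⁻¹ * TT n j q m

noncomputable def FF (n j : ℕ) (a : ℝ) (q p : ℕ) : ℂ :=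
  (∑ m ∈ Finset.range n, gamA n j a q m * (m.choose p)) * (ccA a) ^ p

noncomputable def fcol (n j : ℕ) (a : ℝ) (w : ℤ × ℤ) : ℂ :=
  FF n j a (w.2 / 2).toNat (((w.1 - 1) / 2).toNat)

lemma bbA_eq (a : ℝ) : bbA a = 1 + (a : ℂ) ^ 2 := by
  unfold bbA ccA; rw [mul_pow, Complex.I_sq]; ring

lemma ccA_ne (a : ℝ) (ha : a ≠ 0) : ccA a ≠ 0 := by
  simp [ccA, Complex.I_ne_zero, ha, Complex.ofReal_ne_zero]

lemma bbA_ne (a : ℝ) : bbA a ≠ 0 := by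
  rw [bbA_eq]
  have h : ((1 + a ^ 2 : ℝ) : ℂ) = 1 + (a : ℂ) ^ 2 := by push_cast; ring
  rw [← h]
  exact Complex.ofReal_ne_zero.mpr (by positivity)

lemma TT_top (n j q m : ℕ) (h : n ≤ m) : TT n j q m = 0 := by
  unfold TT
  apply Finset.sum_eq_zero
  intro k _
  rw [if_neg (by omega)]

lemma mem_aztecWhite {n : ℕ} {x y : ℤ} :
    ((x, y) ∈ aztecWhite n) ↔ (x % 2 = 1 ∧ y % 2 = 0 ∧ 1 ≤ x ∧ x ≤ 2 * (n : ℤ) - 1 ∧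
      0 ≤ y ∧ y ≤ 2 * (n : ℤ)) := by
  unfold aztecWhite
  simp only [Finset.mem_filter, Finset.mem_product, Finset.mem_Icc]
  constructor
  · rintro ⟨_, h⟩; exact h
  · rintro ⟨h1, h2, h3, h4, h5, h6⟩
    exact ⟨⟨⟨by omega, by omega⟩, by omega, by omega⟩, h1, h2, h3, h4, h5, h6⟩

lemma mem_aztecBlack {n : ℕ} {x y : ℤ} :
    ((x, y) ∈ aztecBlack n) ↔ (x % 2 = 0 ∧ y % 2 = 1 ∧ 0 ≤ x ∧ x ≤ 2 * (n : ℤ) ∧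
      1 ≤ y ∧ y ≤ 2 * (n : ℤ) - 1) := by
  unfold aztecBlack
  simp only [Finset.mem_filter, Finset.mem_product, Finset.mem_Icc]
  constructor
  · rintro ⟨_, h⟩; exact h
  · rintro ⟨h1, h2, h3, h4, h5, h6⟩
    exact ⟨⟨⟨by omega, by omega⟩, by omega, by omega⟩, h1, h2, h3, h4, h5, h6⟩

lemma TT_succ (n j s m : ℕ) : TT n j (s + 1) m = TT n j s m - TT n j s (m + 1) := by
  unfold TT
  rw [Finset.sum_range_succ'
    (fun k => if m + k < n then (-1 : ℂ) ^ k * ((s + 1).choose k) * ((m + k).choose j) else 0)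
    (s + 1)]
  rw [Finset.sum_range_succ'
    (fun k => if m + k < n then (-1 : ℂ) ^ k * (s.choose k) * ((m + k).choose j) else 0) s]
  have hpt : ∀ k ∈ Finset.range (s + 1),
      (if m + (k + 1) < n then (-1 : ℂ) ^ (k + 1) * ((s + 1).choose (k + 1)) * ((m + (k + 1)).choose j) else 0)
      = (if m + (k + 1) < n then (-1 : ℂ) ^ (k + 1) * (s.choose (k + 1)) * ((m + (k + 1)).choose j) else 0)
        - (if m + 1 + k < n then (-1 : ℂ) ^ k * (s.choose k) * ((m + 1 + k).choose j) else 0) := by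
    intro k _
    have h2 : m + 1 + k = m + (k + 1) := by omega
    rw [h2]
    by_cases hc : m + (k + 1) < n
    · rw [if_pos hc, if_pos hc, if_pos hc]
      push_cast [Nat.choose_succ_succ]
      ring
    · rw [if_neg hc, if_neg hc, if_neg hc]; ring
  rw [Finset.sum_congr rfl hpt, Finset.sum_sub_distrib, Finset.sum_range_succ
    (fun k => if m + (k + 1) < n then (-1 : ℂ) ^ (k + 1) * (s.choose (k + 1)) * ((m + (k + 1)).choose j) else 0)]
  simp only [Nat.choose_succ_self, Nat.cast_zero, mul_zero, zero_mul, ite_self, add_zero,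
    Nat.choose_zero_right]
  ring

lemma TT_zero (n j s : ℕ) (hs : s < n) :
    TT n j s 0 = if s = j then (-1 : ℂ) ^ j else 0 := by
  unfold TT
  have h1 : ∀ k ∈ Finset.range (s + 1),
      (if 0 + k < n then (-1 : ℂ) ^ k * (s.choose k) * ((0 + k).choose j) else 0)
        = (-1 : ℂ) ^ k * (s.choose k) * (k.choose j) := by
    intro k hk
    simp only [Finset.mem_range] at hk
    rw [if_pos (by omega), Nat.zero_add]
  rw [Finset.sum_congr rfl h1]
  by_cases hsj : s < j
  · rw [if_neg (by omega)]
    apply Finset.sum_eq_zero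
    intro k hk
    simp only [Finset.mem_range] at hk
    have : k < j := by omega
    simp [Nat.choose_eq_zero_of_lt this]
  · push_neg at hsj
    have hsub : Finset.Ico j (s + 1) ⊆ Finset.range (s + 1) := by
      intro k hk; simp only [Finset.mem_Ico] at hk; simp only [Finset.mem_range]; omega
    rw [← Finset.sum_subset hsub (by
      intro k hk hk2
      simp only [Finset.mem_range] at hk
      simp only [Finset.mem_Ico] at hk2
      have : k < j := by omega
      simp [Nat.choose_eq_zero_of_lt this])]
    rw [Finset.sum_Ico_eq_sum_range]
    have h2 : ∀ t ∈ Finset.range (s + 1 - j),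
        (-1 : ℂ) ^ (j + t) * (s.choose (j + t)) * ((j + t).choose j)
          = ((-1 : ℂ) ^ j * (s.choose j)) * ((-1 : ℂ) ^ t * ((s - j).choose t)) := by
      intro t ht
      simp only [Finset.mem_range] at ht
      have htj : j + t ≤ s := by omega
      have hmul := Nat.choose_mul (n := s) (Nat.le_add_right j t)
      have ht2 : j + t - j = t := by omega
      rw [ht2] at hmul
      have hc : ((s.choose (j + t) : ℂ)) * ((j + t).choose j)
          = (s.choose j : ℂ) * ((s - j).choose t) := by exact_mod_cast hmul
      rw [pow_add]
      linear_combination ((-1 : ℂ) ^ j * (-1 : ℂ) ^ t) * hc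
    rw [Finset.sum_congr rfl h2, ← Finset.mul_sum]
    by_cases hsj2 : s = j
    · subst hsj2
      simp [Nat.choose_self]
    · rw [if_neg hsj2]
      have hd : s + 1 - j = (s - j) + 1 := by omega
      rw [hd]
      have h4 : ∑ t ∈ Finset.range ((s - j) + 1), (-1 : ℂ) ^ t * ((s - j).choose t) = 0 := by
        have h := Int.alternating_sum_range_choose (n := s - j)
        rw [if_neg (by omega)] at h
        have h' := congrArg (fun z : ℤ => (z : ℂ)) h
        push_cast at h'
        exact h'
      rw [h4, mul_zero]

lemma FF_top (n j : ℕ) (a : ℝ) (q : ℕ) : FF n j a q n = 0 := by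
  unfold FF
  rw [Finset.sum_eq_zero, zero_mul]
  intro m hm
  simp only [Finset.mem_range] at hm
  simp [Nat.choose_eq_zero_of_lt hm]

lemma LR1 (n j : ℕ) (a : ℝ) (ha : a ≠ 0) (s r : ℕ) :
    FF n j a s r + ccA a * FF n j a (s + 1) r + ccA a * FF n j a s (r + 1)
      + FF n j a (s + 1) (r + 1) = 0 := by
  have hc := ccA_ne a ha
  have hb := bbA_ne a
  set c := ccA a with hcdef
  set β := bbA a with hbdef
  have hb2 : β = 1 - c ^ 2 := rfl
  unfold FF
  set u : ℕ → ℂ := fun m =>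
    (-(c) ^ (j + 1) * (-(c)⁻¹) ^ s) * c ^ r * ((β ^ m)⁻¹) * TT n j s m * ((m.choose (r + 1) : ℕ) : ℂ)
    with hu
  have key : (∑ m ∈ Finset.range n, gamA n j a s m * (m.choose r)) * c ^ r
      + c * ((∑ m ∈ Finset.range n, gamA n j a (s + 1) m * (m.choose r)) * c ^ r)
      + c * ((∑ m ∈ Finset.range n, gamA n j a s m * (m.choose (r + 1))) * c ^ (r + 1))
      + (∑ m ∈ Finset.range n, gamA n j a (s + 1) m * (m.choose (r + 1))) * c ^ (r + 1)
      = ∑ m ∈ Finset.range n, (u (m + 1) - u m) := by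
    rw [Finset.sum_mul, Finset.sum_mul, Finset.sum_mul, Finset.sum_mul, Finset.mul_sum,
      Finset.mul_sum, ← Finset.sum_add_distrib, ← Finset.sum_add_distrib,
      ← Finset.sum_add_distrib]
    apply Finset.sum_congr rfl
    intro m _
    unfold gamA
    rw [TT_succ]
    rw [← hcdef, ← hbdef]
    simp only [hu]
    have hP : (((m + 1).choose (r + 1) : ℕ) : ℂ) = (m.choose r) + (m.choose (r + 1)) := by
      push_cast [Nat.choose_succ_succ]; ring
    rw [hP]
    have hβm : (β ^ (m + 1))⁻¹ = (β ^ m)⁻¹ * β⁻¹ := by rw [pow_succ, mul_inv]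
    rw [hβm, pow_succ (-(c)⁻¹) s, hb2]
    have hc2 : (1 : ℂ) - c ^ 2 ≠ 0 := by rw [← hb2]; exact hb
    have hci' : c * c⁻¹ = 1 := mul_inv_cancel₀ hc
    have hbi' : (1 - c ^ 2) * (1 - c ^ 2)⁻¹ = 1 := mul_inv_cancel₀ hc2
    linear_combination
      (-(c ^ (j + 1)) * (-c⁻¹) ^ s * c ^ r * ((1 - c ^ 2) ^ m)⁻¹ * (1 - c ^ 2)⁻¹ *
        (TT n j s (m + 1) * (m.choose r : ℂ) + TT n j s (m + 1) * (m.choose (r + 1) : ℂ)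
          - TT n j s m * (m.choose r : ℂ) - TT n j s m * (m.choose (r + 1) : ℂ))) * hci'
      + ((c ^ (j + 1)) * (-c⁻¹) ^ s * c ^ r * ((1 - c ^ 2) ^ m)⁻¹ *
        (TT n j s m * (m.choose (r + 1) : ℂ))) * hbi'
  rw [key, Finset.sum_range_sub u n]
  have h1 : u n = 0 := by simp [hu, TT_top n j s n le_rfl]
  have h2 : u 0 = 0 := by simp [hu, Nat.choose_eq_zero_of_lt (Nat.succ_pos r)]
  rw [h1, h2, sub_zero]

lemma LR0 (n j : ℕ) (a : ℝ) (ha : a ≠ 0) (s : ℕ) (hs : s < n) :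
    ccA a * FF n j a s 0 + FF n j a (s + 1) 0 = if s = j then 1 else 0 := by
  have hc := ccA_ne a ha
  have hb := bbA_ne a
  set c := ccA a with hcdef
  set β := bbA a with hbdef
  unfold FF
  simp only [Nat.choose_zero_right, Nat.cast_one, mul_one, pow_zero]
  set v : ℕ → ℂ := fun m =>
    (-(c) ^ (j + 1) * (-(c)⁻¹) ^ s) * c⁻¹ * ((β ^ m)⁻¹) * TT n j s m with hv
  have key : c * (∑ m ∈ Finset.range n, gamA n j a s m)
      + (∑ m ∈ Finset.range n, gamA n j a (s + 1) m)
      = ∑ m ∈ Finset.range n, (v (m + 1) - v m) := by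
    rw [Finset.mul_sum, ← Finset.sum_add_distrib]
    apply Finset.sum_congr rfl
    intro m _
    unfold gamA
    rw [TT_succ, ← hcdef, ← hbdef]
    simp only [hv]
    have hβm : (β ^ (m + 1))⁻¹ = (β ^ m)⁻¹ * β⁻¹ := by rw [pow_succ, mul_inv]
    have hb2 : β = 1 - c ^ 2 := rfl
    rw [hβm, pow_succ (-(c)⁻¹) s, hb2]
    have hc2 : (1 : ℂ) - c ^ 2 ≠ 0 := by rw [← hb2]; exact hb
    have hci' : c * c⁻¹ = 1 := mul_inv_cancel₀ hc
    have hbi' : (1 - c ^ 2) * (1 - c ^ 2)⁻¹ = 1 := mul_inv_cancel₀ hc2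
    linear_combination
      ((-(c ^ (j + 1)) * (-c⁻¹) ^ s * ((1 - c ^ 2) ^ m)⁻¹) * TT n j s m * (-(c⁻¹))) * hbi'
      + ((-(c ^ (j + 1)) * (-c⁻¹) ^ s * ((1 - c ^ 2) ^ m)⁻¹) * TT n j s m
          * (-(c * (1 - c ^ 2)⁻¹))) * hci'
  rw [key, Finset.sum_range_sub v n]
  have h1 : v n = 0 := by simp [hv, TT_top n j s n le_rfl]
  rw [h1, zero_sub]
  simp only [hv, pow_zero, inv_one, mul_one, TT_zero n j s hs]
  by_cases hsj : s = j
  · subst hsj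
    rw [if_pos rfl, if_pos rfl]
    have hpow : ((-1 : ℂ)) ^ s * (-1 : ℂ) ^ s = 1 := by
      rw [← pow_add, ← two_mul, pow_mul]; norm_num
    rw [neg_pow (c⁻¹) s, inv_pow]
    have hS : c ^ s * (c ^ s)⁻¹ = 1 := mul_inv_cancel₀ (pow_ne_zero s hc)
    have hci' : c * c⁻¹ = 1 := mul_inv_cancel₀ hc
    linear_combination (c ^ s * (c ^ s)⁻¹ * (c * c⁻¹)) * hpow + (c * c⁻¹) * hS + hci'
  · rw [if_neg hsj, if_neg hsj, mul_zero, neg_zero]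

lemma kbias_split (a : ℝ) (x y : ℤ) (f : ℤ × ℤ → ℂ) (w : ℤ × ℤ) :
    Kbias a (x, y) w * f w =
      (if w = (x - 1, y - 1) then f w else 0) + (if w = (x + 1, y + 1) then f w else 0)
      + (a : ℂ) * Complex.I *
        ((if w = (x + 1, y - 1) then f w else 0) + (if w = (x - 1, y + 1) then f w else 0)) := by
  obtain ⟨u, v⟩ := w
  have e1 : ((x, y) : ℤ × ℤ) - (u, v) = (x - u, y - v) := rfl
  simp only [Kbias, e1, Prod.mk.injEq]
  split_ifs <;> first | ring1 | (exfalso; omega)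

lemma aztec_sum_collapse (n : ℕ) (a : ℝ) (f : ℤ × ℤ → ℂ) (x y : ℤ) :
    ∑ w ∈ aztecWhite n, Kbias a (x, y) w * f w =
      (if (x - 1, y - 1) ∈ aztecWhite n then f (x - 1, y - 1) else 0)
      + (if (x + 1, y + 1) ∈ aztecWhite n then f (x + 1, y + 1) else 0)
      + (a : ℂ) * Complex.I *
        ((if (x + 1, y - 1) ∈ aztecWhite n then f (x + 1, y - 1) else 0)
        + (if (x - 1, y + 1) ∈ aztecWhite n then f (x - 1, y + 1) else 0)) := by
  rw [Finset.sum_congr rfl fun w _ => kbias_split a x y f w]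
  rw [Finset.sum_add_distrib, Finset.sum_add_distrib, ← Finset.mul_sum, Finset.sum_add_distrib]
  rw [Finset.sum_ite_eq' (aztecWhite n) (x - 1, y - 1) f,
    Finset.sum_ite_eq' (aztecWhite n) (x + 1, y + 1) f,
    Finset.sum_ite_eq' (aztecWhite n) (x + 1, y - 1) f,
    Finset.sum_ite_eq' (aztecWhite n) (x - 1, y + 1) f]

lemma fcol_eval (n j : ℕ) (a : ℝ) (p q : ℕ) (x y : ℤ)
    (hx : x = 2 * (p : ℤ) + 1) (hy : y = 2 * (q : ℤ)) :
    fcol n j a (x, y) = FF n j a q p := by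
  subst hx hy
  unfold fcol
  have h1 : ((2 * (q : ℤ)) / 2).toNat = q := by omega
  have h2 : ((2 * (p : ℤ) + 1 - 1) / 2).toNat = p := by omega
  simp only [h1, h2]

lemma Kf (n j : ℕ) (a : ℝ) (ha : a ≠ 0) (hn : 1 ≤ n) (hj : j < n) :
    ∀ b ∈ aztecBlack n, ∑ w ∈ aztecWhite n, Kbias a b w * fcol n j a w
      = if b = ((0 : ℤ), 2 * (j : ℤ) + 1) then 1 else 0 := by
  intro b hb
  obtain ⟨x, y⟩ := b
  rw [mem_aztecBlack] at hb
  obtain ⟨r, hr0, hrn⟩ : ∃ r : ℕ, x = 2 * (r : ℤ) ∧ r ≤ n := ⟨x.toNat / 2, by omega⟩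
  obtain ⟨s, hs0, hsn⟩ : ∃ s : ℕ, y = 2 * (s : ℤ) + 1 ∧ s < n := ⟨y.toNat / 2, by omega⟩
  subst hr0 hs0
  rw [aztec_sum_collapse]
  have hrhs : (((2 * (r : ℤ), 2 * (s : ℤ) + 1) : ℤ × ℤ) = ((0 : ℤ), 2 * (j : ℤ) + 1))
      ↔ (r = 0 ∧ s = j) := by
    rw [Prod.mk.injEq]; omega
  by_cases hr1 : r = 0
  · have m1 : ¬(((2 * (r : ℤ) - 1, 2 * (s : ℤ) + 1 - 1) : ℤ × ℤ) ∈ aztecWhite n) := by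
      rw [mem_aztecWhite]; omega
    have m2 : (((2 * (r : ℤ) + 1, 2 * (s : ℤ) + 1 + 1) : ℤ × ℤ) ∈ aztecWhite n) := by
      rw [mem_aztecWhite]; omega
    have m3 : (((2 * (r : ℤ) + 1, 2 * (s : ℤ) + 1 - 1) : ℤ × ℤ) ∈ aztecWhite n) := by
      rw [mem_aztecWhite]; omega
    have m4 : ¬(((2 * (r : ℤ) - 1, 2 * (s : ℤ) + 1 + 1) : ℤ × ℤ) ∈ aztecWhite n) := by
      rw [mem_aztecWhite]; omega
    rw [if_neg m1, if_pos m2, if_pos m3, if_neg m4]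
    rw [fcol_eval n j a r (s + 1) _ _ (by omega) (by omega),
      fcol_eval n j a r s _ _ (by omega) (by omega)]
    have h0 := LR0 n j a ha s hsn
    rw [show (ccA a) = (a : ℂ) * Complex.I from rfl] at h0
    have hFr : FF n j a (s + 1) r = FF n j a (s + 1) 0 := by rw [hr1]
    have hFr2 : FF n j a s r = FF n j a s 0 := by rw [hr1]
    rw [hFr, hFr2]
    by_cases hsj : s = j
    · rw [if_pos (hrhs.mpr ⟨hr1, hsj⟩)]
      rw [if_pos hsj] at h0
      linear_combination h0
    · rw [if_neg (fun hcon => hsj (hrhs.mp hcon).2)]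
      rw [if_neg hsj] at h0
      linear_combination h0
  · have hr1' : 1 ≤ r := by omega
    rw [if_neg (fun hcon => hr1 (hrhs.mp hcon).1)]
    have m1 : (((2 * (r : ℤ) - 1, 2 * (s : ℤ) + 1 - 1) : ℤ × ℤ) ∈ aztecWhite n) := by
      rw [mem_aztecWhite]; omega
    have m4 : (((2 * (r : ℤ) - 1, 2 * (s : ℤ) + 1 + 1) : ℤ × ℤ) ∈ aztecWhite n) := by
      rw [mem_aztecWhite]; omega
    by_cases hr2 : r = n
    · have m2 : ¬(((2 * (r : ℤ) + 1, 2 * (s : ℤ) + 1 + 1) : ℤ × ℤ) ∈ aztecWhite n) := by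
        rw [mem_aztecWhite]; omega
      have m3 : ¬(((2 * (r : ℤ) + 1, 2 * (s : ℤ) + 1 - 1) : ℤ × ℤ) ∈ aztecWhite n) := by
        rw [mem_aztecWhite]; omega
      rw [if_pos m1, if_neg m2, if_neg m3, if_pos m4]
      rw [fcol_eval n j a (r - 1) s _ _ (by omega) (by omega),
        fcol_eval n j a (r - 1) (s + 1) _ _ (by omega) (by omega)]
      have h1 := LR1 n j a ha s (r - 1)
      have hrr : r - 1 + 1 = r := by omega
      rw [hrr] at h1
      have hz1 : FF n j a s r = 0 := by rw [hr2]; exact FF_top n j a s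
      have hz2 : FF n j a (s + 1) r = 0 := by rw [hr2]; exact FF_top n j a (s + 1)
      rw [hz1, hz2, show (ccA a) = (a : ℂ) * Complex.I from rfl] at h1
      linear_combination h1
    · have m2 : (((2 * (r : ℤ) + 1, 2 * (s : ℤ) + 1 + 1) : ℤ × ℤ) ∈ aztecWhite n) := by
        rw [mem_aztecWhite]; omega
      have m3 : (((2 * (r : ℤ) + 1, 2 * (s : ℤ) + 1 - 1) : ℤ × ℤ) ∈ aztecWhite n) := by
        rw [mem_aztecWhite]; omega
      rw [if_pos m1, if_pos m2, if_pos m3, if_pos m4]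
      rw [fcol_eval n j a (r - 1) s _ _ (by omega) (by omega),
        fcol_eval n j a r (s + 1) _ _ (by omega) (by omega),
        fcol_eval n j a r s _ _ (by omega) (by omega),
        fcol_eval n j a (r - 1) (s + 1) _ _ (by omega) (by omega)]
      have h1 := LR1 n j a ha s (r - 1)
      have hrr : r - 1 + 1 = r := by omega
      rw [hrr, show (ccA a) = (a : ℂ) * Complex.I from rfl] at h1
      linear_combination h1

/-- Boundary values of the inverse of the one-periodic (bias `a`)
Kasteleyn matrix of the Aztec diamond of order `n`. -/
theorem biased_inverse_kasteleyn_boundary_values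
    (n : ℕ) (hn : 1 ≤ n) (a : ℝ) (ha : 0 < a) (L : ℤ × ℤ → ℤ × ℤ → ℂ)
    (hKL : ∀ b ∈ aztecBlack n, ∀ b' ∈ aztecBlack n,
      ∑ w ∈ aztecWhite n, Kbias a b w * L w b' = if b = b' then 1 else 0)
    (hLK : ∀ w ∈ aztecWhite n, ∀ w' ∈ aztecWhite n,
      ∑ b ∈ aztecBlack n, L w b * Kbias a b w' = if w = w' then 1 else 0)
    (i j : ℕ) (hi : i < n) (hj : j < n) :
    L ((2 * (i : ℤ) + 1, 0)) ((0, 2 * (j : ℤ) + 1)) =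
      -Complex.I ^ (i + j + 1) *
        ((a : ℂ) ^ (1 + i + j) / (1 + (a : ℂ) ^ 2)) *
        ∑ m ∈ Finset.range n,
          (m.choose i : ℂ) * (m.choose j) * ((1 + (a : ℂ) ^ 2) ^ m)⁻¹ := by
  have ha' : a ≠ 0 := ne_of_gt ha
  have hb' : (((0 : ℤ), 2 * (j : ℤ) + 1) : ℤ × ℤ) ∈ aztecBlack n := by
    rw [mem_aztecBlack]; omega
  have hw0 : ((2 * (i : ℤ) + 1, (0 : ℤ)) : ℤ × ℤ) ∈ aztecWhite n := by
    rw [mem_aztecWhite]; omega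
  have hKf := Kf n j a ha' hn hj
  have hzero : ∀ b ∈ aztecBlack n,
      ∑ w ∈ aztecWhite n, Kbias a b w *
        (L w ((0 : ℤ), 2 * (j : ℤ) + 1) - fcol n j a w) = 0 := by
    intro b hb
    have hsplit : ∑ w ∈ aztecWhite n, Kbias a b w *
          (L w ((0 : ℤ), 2 * (j : ℤ) + 1) - fcol n j a w)
        = ∑ w ∈ aztecWhite n, Kbias a b w * L w ((0 : ℤ), 2 * (j : ℤ) + 1)
          - ∑ w ∈ aztecWhite n, Kbias a b w * fcol n j a w := by
      rw [← Finset.sum_sub_distrib]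
      apply Finset.sum_congr rfl
      intro w _; ring
    rw [hsplit, hKL b hb _ hb', hKf b hb, sub_self]
  have key : ∀ w0 ∈ aztecWhite n,
      L w0 ((0 : ℤ), 2 * (j : ℤ) + 1) - fcol n j a w0 = 0 := by
    intro w0 hw0'
    have h1 : ∑ w ∈ aztecWhite n, (if w0 = w then (1 : ℂ) else 0) *
          (L w ((0 : ℤ), 2 * (j : ℤ) + 1) - fcol n j a w)
        = L w0 ((0 : ℤ), 2 * (j : ℤ) + 1) - fcol n j a w0 := by
      simp only [ite_mul, one_mul, zero_mul]
      rw [Finset.sum_ite_eq (aztecWhite n) w0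
        (fun w => L w ((0 : ℤ), 2 * (j : ℤ) + 1) - fcol n j a w), if_pos hw0']
    have h2 : ∑ w ∈ aztecWhite n, (if w0 = w then (1 : ℂ) else 0) *
          (L w ((0 : ℤ), 2 * (j : ℤ) + 1) - fcol n j a w)
        = ∑ w ∈ aztecWhite n, (∑ b ∈ aztecBlack n, L w0 b * Kbias a b w) *
          (L w ((0 : ℤ), 2 * (j : ℤ) + 1) - fcol n j a w) := by
      apply Finset.sum_congr rfl
      intro w hw
      rw [hLK w0 hw0' w hw]
    have h3 : ∑ w ∈ aztecWhite n, (∑ b ∈ aztecBlack n, L w0 b * Kbias a b w) *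
          (L w ((0 : ℤ), 2 * (j : ℤ) + 1) - fcol n j a w)
        = ∑ b ∈ aztecBlack n, L w0 b * (∑ w ∈ aztecWhite n, Kbias a b w *
          (L w ((0 : ℤ), 2 * (j : ℤ) + 1) - fcol n j a w)) := by
      simp_rw [Finset.sum_mul]
      rw [Finset.sum_comm]
      apply Finset.sum_congr rfl
      intro b _
      rw [Finset.mul_sum]
      apply Finset.sum_congr rfl
      intro w _
      ring
    rw [← h1, h2, h3]
    apply Finset.sum_eq_zero
    intro b hb
    rw [hzero b hb, mul_zero]
  have hL : L ((2 * (i : ℤ) + 1, 0)) ((0, 2 * (j : ℤ) + 1))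
      = fcol n j a (2 * (i : ℤ) + 1, 0) := sub_eq_zero.mp (key _ hw0)
  rw [hL, fcol_eval n j a i 0 _ _ rfl (by norm_num)]
  unfold FF gamA
  rw [Finset.sum_mul, Finset.mul_sum]
  apply Finset.sum_congr rfl
  intro m hm
  have hmn : m < n := Finset.mem_range.mp hm
  have hT : TT n j 0 m = ((m.choose j : ℕ) : ℂ) := by
    unfold TT
    rw [Finset.sum_range_one, if_pos (by omega)]
    norm_num
  rw [hT, bbA_eq, show ccA a = (a : ℂ) * Complex.I from rfl]
  simp only [pow_zero, mul_one]
  have hβ : (1 : ℂ) + (a : ℂ) ^ 2 ≠ 0 := by rw [← bbA_eq]; exact bbA_ne a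
  have hβm : ((1 : ℂ) + (a : ℂ) ^ 2) ^ m ≠ 0 := pow_ne_zero m hβ
  have hinv : ((1 + (a : ℂ) ^ 2) ^ (m + 1))⁻¹
      = ((1 + (a : ℂ) ^ 2) ^ m)⁻¹ * (1 + (a : ℂ) ^ 2)⁻¹ := by
    rw [pow_succ, mul_inv]
  rw [hinv]
  ring
end

section
/- Let n ≥ 1 and let a, q > 0 be real. Define g on the vertices of AD_n by: for a white vertex y = (y1,y2), g(y) = q^{((y2−y1+1)/2)²} if y2 > y1 and g(y) = q^{(y2−y1+1)/2} if y1 > y2; for a black vertex x = (x1,x2), g(x) = q^{−((x2−x1+1)/2)²} if x1 < x2 and g(x) = q^{(x1−x2−1)/2} if x1 > x2. Then for all x ∈ B_n and y ∈ W_n, K_diag(x,y) = g(x)·g(y)·K_col(x,y); that is, the gauge transformation g carries the q^{col} weighting to the q^{diag} weighting. -/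
open Finset

/-- The `q^col` Kasteleyn matrix (rows: black, columns: white). -/
noncomputable def Kcol (n : ℕ) (a q : ℝ) (x y : ℤ × ℤ) : ℂ :=
  if y - x = (1, 1) ∨ y - x = (-1, -1) then 1
  else if y - x = (-1, 1) then (a : ℂ) * (q : ℂ) ^ (x.1 - 2 * (n : ℤ) - 1) * Complex.I
  else if y - x = (1, -1) then (a : ℂ) * (q : ℂ) ^ (2 * (n : ℤ) - x.1) * Complex.I
  else 0

/-- The `q^diag` Kasteleyn matrix (rows: black, columns: white). -/
noncomputable def Kdiag (n : ℕ) (a q : ℝ) (x y : ℤ × ℤ) : ℂ :=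
  if y - x = (1, 1) ∨ y - x = (-1, -1) then 1
  else if y - x = (-1, 1) then
    Complex.I * (a : ℂ) *
      (q : ℂ) ^ (-2 * min ((n : ℤ) - x.1 / 2) ((n : ℤ) - (x.2 + 1) / 2))
  else if y - x = (1, -1) then
    Complex.I * (a : ℂ) *
      (q : ℂ) ^ (2 * min ((n : ℤ) - x.1 / 2 - 1) ((n : ℤ) - (x.2 + 1) / 2) + 1)
  else 0

/-- The gauge function: on white vertices `y`, `q^{((y2−y1+1)/2)²}` if `y2 > y1` and
`q^{(y2−y1+1)/2}` if `y1 > y2`; on black vertices `x`, `q^{−((x2−x1+1)/2)²}` if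
`x1 < x2` and `q^{(x1−x2−1)/2}` if `x1 > x2`.  (First coordinate odd means white.) -/
noncomputable def gaugeFun (q : ℝ) (p : ℤ × ℤ) : ℂ :=
  if p.1 % 2 = 1 then
    (if p.1 < p.2 then (q : ℂ) ^ (((p.2 - p.1 + 1) / 2) ^ 2)
     else (q : ℂ) ^ ((p.2 - p.1 + 1) / 2))
  else
    (if p.1 < p.2 then (q : ℂ) ^ (-(((p.2 - p.1 + 1) / 2) ^ 2))
     else (q : ℂ) ^ ((p.1 - p.2 - 1) / 2))

/-- The gauge transformation carrying the `q^col` weighting to the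
`q^diag` weighting of the Aztec diamond of order `n`. -/
theorem qcol_gauge_equivalent_qdiag (n : ℕ) (hn : 1 ≤ n) (a q : ℝ)
    (ha : 0 < a) (hq : 0 < q) :
    ∀ x ∈ aztecBlack n, ∀ y ∈ aztecWhite n,
      Kdiag n a q x y = gaugeFun q x * gaugeFun q y * Kcol n a q x y := by
  have hq0 : (q : ℂ) ≠ 0 := Complex.ofReal_ne_zero.mpr hq.ne'
  have hmul : ∀ B C : ℤ, B + C = 0 → (q:ℂ) ^ B * (q:ℂ) ^ C * 1 = 1 := by
    intro B C h
    rw [mul_one, ← zpow_add₀ hq0, h, zpow_zero]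
  have hmul2 : ∀ B C D A : ℤ, B + C + D = A →
      (q:ℂ) ^ B * (q:ℂ) ^ C * ((a:ℂ) * (q:ℂ) ^ D * Complex.I)
        = Complex.I * (a:ℂ) * (q:ℂ) ^ A := by
    intro B C D A h
    rw [← h, zpow_add₀ hq0, zpow_add₀ hq0]; ring
  rintro ⟨x1, x2⟩ hx ⟨y1, y2⟩ hy
  simp only [aztecBlack, aztecWhite, Finset.mem_filter] at hx hy
  obtain ⟨-, hx1, hx2, -, hx4, hx5, hx6⟩ := hx
  obtain ⟨-, hy1, hy2, hy3, hy4, -, hy6⟩ := hy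
  simp only [Kdiag, Kcol, gaugeFun, Prod.mk_sub_mk, Prod.mk.injEq]
  rw [if_neg (show ¬ ((x1 : ℤ) % 2 = 1) from by omega),
      if_pos (show (y1 : ℤ) % 2 = 1 from hy1)]
  by_cases hd : (y1 - x1 = 1 ∧ y2 - x2 = 1) ∨ (y1 - x1 = -1 ∧ y2 - x2 = -1)
  · rw [if_pos hd, if_pos hd]
    have hdd : y2 - y1 = x2 - x1 ∧ (x1 < x2 ↔ y1 < y2) := by
      rcases hd with ⟨h1, h2⟩ | ⟨h1, h2⟩ <;> constructor <;> omega
    by_cases hlt : x1 < x2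
    · rw [if_pos hlt, if_pos (hdd.2.mp hlt)]
      refine (hmul _ _ ?_).symm
      rw [show (y2 - y1 + 1) / 2 = (x2 - x1 + 1) / 2 from by omega]
      ring
    · rw [if_neg hlt, if_neg (fun h => hlt (hdd.2.mpr h))]
      exact (hmul _ _ (by omega)).symm
  · rw [if_neg hd, if_neg hd]
    by_cases hl : y1 - x1 = -1 ∧ y2 - x2 = 1
    · rw [if_pos hl, if_pos hl]
      obtain ⟨h1, h2⟩ := hl
      by_cases hlt : x1 < x2
      · rw [if_pos hlt, if_pos (show y1 < y2 from by omega)]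
        refine (hmul2 _ _ _ _ ?_).symm
        obtain ⟨t, ht⟩ : ∃ t, x2 - x1 + 1 = 2 * t := ⟨(x2 - x1 + 1) / 2, by omega⟩
        obtain ⟨u, hu⟩ : ∃ u, x1 = 2 * u := ⟨x1 / 2, by omega⟩
        rw [show (x2 - x1 + 1) / 2 = t from by omega,
            show (y2 - y1 + 1) / 2 = t + 1 from by omega,
            show x1 / 2 = u from by omega,
            show (x2 + 1) / 2 = u + t from by omega,
            hu, min_eq_right (show (n:ℤ) - (u + t) ≤ (n:ℤ) - u from by omega)]
        ring
      · by_cases hylt : y1 < y2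
        · rw [if_neg hlt, if_pos hylt]
          refine (hmul2 _ _ _ _ ?_).symm
          rw [show (y2 - y1 + 1) / 2 = 1 from by omega, one_pow,
              show (x2 + 1) / 2 = x1 / 2 from by omega, min_self]
          omega
        · rw [if_neg hlt, if_neg hylt]
          exact (hmul2 _ _ _ _ (by omega)).symm
    · rw [if_neg hl, if_neg hl]
      by_cases hr : y1 - x1 = 1 ∧ y2 - x2 = -1
      · rw [if_pos hr, if_pos hr]
        obtain ⟨h1, h2⟩ := hr
        by_cases hylt : y1 < y2
        · rw [if_pos (show x1 < x2 from by omega), if_pos hylt]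
          refine (hmul2 _ _ _ _ ?_).symm
          obtain ⟨t, ht⟩ : ∃ t, x2 - x1 + 1 = 2 * t := ⟨(x2 - x1 + 1) / 2, by omega⟩
          obtain ⟨u, hu⟩ : ∃ u, x1 = 2 * u := ⟨x1 / 2, by omega⟩
          rw [show (x2 - x1 + 1) / 2 = t from by omega,
              show (y2 - y1 + 1) / 2 = t - 1 from by omega,
              show x1 / 2 = u from by omega,
              show (x2 + 1) / 2 = u + t from by omega,
              hu, min_eq_right (show (n:ℤ) - (u + t) ≤ (n:ℤ) - u - 1 from by omega)]
          ring
        · by_cases hlt : x1 < x2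
          · rw [if_pos hlt, if_neg hylt]
            refine (hmul2 _ _ _ _ ?_).symm
            rw [show (x2 - x1 + 1) / 2 = 1 from by omega, one_pow]
            omega
          · rw [if_neg hlt, if_neg hylt]
            exact (hmul2 _ _ _ _ (by omega)).symm
      · rw [if_neg hr, if_neg hr, mul_zero]
end

section
/- Let a, q > 0 be real, n ≥ 1, and 0 ≤ i,j ≤ n−1. Let Z^{col}_n(a) be the partition function of AD_n with the q^{col} edge weights and Z^{col}(i,j,a,n) the partition function of the same weighted graph with the vertices (2n−2i−1,2n) and (2n,2n−2j−1) deleted; let Z^{diag}_n(a) and Z^{diag}(i,j,a,n) be the analogous partition functions for the q^{diag} edge weights with parameter a. Then q^{(i+1)²+j} · Z^{diag}(i,j,a,n) · Z^{col}_n(a) = Z^{col}(i,j,a,n) · Z^{diag}_n(a). -/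
open Finset

noncomputable def aztecEdges (m : ℕ) : Finset ((ℤ × ℤ) × (ℤ × ℤ)) :=
  (aztecBlack m ×ˢ aztecWhite m).filter fun p =>
    p.1 - p.2 = (1, 1) ∨ p.1 - p.2 = (-1, -1) ∨ p.1 - p.2 = (-1, 1) ∨ p.1 - p.2 = (1, -1)

/-- A perfect matching of the Aztec diamond of order `m` with the vertices in `D` deleted. -/
def IsAztecMatching (m : ℕ) (D : Finset (ℤ × ℤ))
    (M : Finset ((ℤ × ℤ) × (ℤ × ℤ))) : Prop :=
  M ⊆ aztecEdges m ∧
  (∀ p ∈ M, p.1 ∉ D ∧ p.2 ∉ D) ∧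
  (∀ b ∈ aztecBlack m \ D, (M.filter fun p => p.1 = b).card = 1) ∧
  (∀ w ∈ aztecWhite m \ D, (M.filter fun p => p.2 = w).card = 1)

noncomputable def aztecMatchings (m : ℕ) (D : Finset (ℤ × ℤ)) :
    Finset (Finset ((ℤ × ℤ) × (ℤ × ℤ))) := by
  classical exact (aztecEdges m).powerset.filter (IsAztecMatching m D)

noncomputable def aztecNum (m : ℕ) (D : Finset (ℤ × ℤ)) : ℕ := (aztecMatchings m D).card

noncomputable def aztecZ (m : ℕ) (D : Finset (ℤ × ℤ))
    (wt : (ℤ × ℤ) × (ℤ × ℤ) → ℝ) : ℝ :=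
  ∑ M ∈ aztecMatchings m D, ∏ p ∈ M, wt p

/-- The `q^diag` edge weights of `AD_m` with parameter `α`: for a black vertex
`x = p.1`, the edges in direction `±e1` have weight `1`, the edge to `x + e2` has
weight `α·q^{−2·min(m−x1/2, m−(x2+1)/2)}`, and the edge to `x − e2` has weight
`α·q^{2·min(m−x1/2−1, m−(x2+1)/2)+1}`.  (`p = (black, white)`.) -/
noncomputable def wtDiag (m : ℕ) (α q : ℝ) (p : (ℤ × ℤ) × (ℤ × ℤ)) : ℝ :=
  if p.2 - p.1 = (1, 1) ∨ p.2 - p.1 = (-1, -1) then 1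
  else if p.2 - p.1 = (-1, 1) then
    α * q ^ (-2 * min ((m : ℤ) - p.1.1 / 2) ((m : ℤ) - (p.1.2 + 1) / 2))
  else if p.2 - p.1 = (1, -1) then
    α * q ^ (2 * min ((m : ℤ) - p.1.1 / 2 - 1) ((m : ℤ) - (p.1.2 + 1) / 2) + 1)
  else 0

/-- The `q^col` edge weights of `AD_n`: for a black vertex `x = p.1`, the edges in
direction `±e1` have weight `1`, the edge to `x + e2` has weight `a·q^{x1−2n−1}`, and
the edge to `x − e2` has weight `a·q^{2n−x1}`.  (`p = (black, white)`.) -/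
noncomputable def wtCol (n : ℕ) (a q : ℝ) (p : (ℤ × ℤ) × (ℤ × ℤ)) : ℝ :=
  if p.2 - p.1 = (1, 1) ∨ p.2 - p.1 = (-1, -1) then 1
  else if p.2 - p.1 = (-1, 1) then a * q ^ (p.1.1 - 2 * (n : ℤ) - 1)
  else if p.2 - p.1 = (1, -1) then a * q ^ (2 * (n : ℤ) - p.1.1)
  else 0


def phiG (d : ℤ) : ℤ := if 0 ≤ d then -d else d ^ 2 - 2 * d

lemma phiG_sub_one (d : ℤ) : phiG d - phiG (d - 1) = if 1 ≤ d then -1 else 2 * d - 3 := by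
  rcases lt_trichotomy d 0 with h | h | h
  · simp only [phiG, if_neg (by omega : ¬ (0:ℤ) ≤ d), if_neg (by omega : ¬ (0:ℤ) ≤ d - 1),
      if_neg (by omega : ¬ (1:ℤ) ≤ d)]
    ring
  · subst h; norm_num [phiG]
  · simp only [phiG, if_pos (by omega : (0:ℤ) ≤ d), if_pos (by omega : (0:ℤ) ≤ d - 1),
      if_pos (by omega : (1:ℤ) ≤ d)]
    ring

def gaugeE (x : ℤ × ℤ) : ℤ :=
  if x.1 % 2 = 0 then phiG ((x.1 - x.2 + 1) / 2) else -phiG ((x.1 - x.2 + 1) / 2)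


lemma gauge_wt (n : ℕ) (a q : ℝ) (hq : 0 < q) (p : (ℤ × ℤ) × (ℤ × ℤ))
    (hp : p ∈ aztecEdges n) :
    wtCol n a q p = q ^ (gaugeE p.1 + gaugeE p.2) * wtDiag n a q p := by
  obtain ⟨⟨b1, b2⟩, ⟨w1, w2⟩⟩ := p
  simp only [aztecEdges, Finset.mem_filter, Finset.mem_product, aztecBlack, aztecWhite,
    Finset.mem_Icc, Prod.mk_sub_mk, Prod.mk.injEq] at hp
  obtain ⟨⟨hb, hw⟩, hdir⟩ := hp
  rcases hdir with ⟨h1, h2⟩ | ⟨h1, h2⟩ | ⟨h1, h2⟩ | ⟨h1, h2⟩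
  · -- b - w = (1,1) : horizontal, w = b - e1
    obtain ⟨rfl, rfl⟩ : w1 = b1 - 1 ∧ w2 = b2 - 1 := by omega
    simp only [wtCol, wtDiag, gaugeE, Prod.mk_sub_mk, Prod.mk.injEq]
    split_ifs <;> try (exfalso; omega)
    have harg : (b1 - 1 - (b2 - 1) + 1) / 2 = (b1 - b2 + 1) / 2 := by omega
    rw [harg, add_neg_cancel, zpow_zero, one_mul]
  · -- b - w = (-1,-1) : horizontal, w = b + e1
    obtain ⟨rfl, rfl⟩ : w1 = b1 + 1 ∧ w2 = b2 + 1 := by omega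
    simp only [wtCol, wtDiag, gaugeE, Prod.mk_sub_mk, Prod.mk.injEq]
    split_ifs <;> try (exfalso; omega)
    have harg : (b1 + 1 - (b2 + 1) + 1) / 2 = (b1 - b2 + 1) / 2 := by omega
    rw [harg, add_neg_cancel, zpow_zero, one_mul]
  · -- b - w = (-1,1) : w = b - e2  (down edge)
    obtain ⟨rfl, rfl⟩ : w1 = b1 + 1 ∧ w2 = b2 - 1 := by omega
    simp only [wtCol, wtDiag, gaugeE, Prod.mk_sub_mk, Prod.mk.injEq]
    split_ifs <;> try (exfalso; omega)
    have harg : (b1 + 1 - (b2 - 1) + 1) / 2 = (b1 - b2 + 1) / 2 + 1 := by omega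
    rw [harg]
    have key : phiG ((b1 - b2 + 1) / 2 + 1) - phiG ((b1 - b2 + 1) / 2) =
        if 1 ≤ (b1 - b2 + 1) / 2 + 1 then -1 else 2 * ((b1 - b2 + 1) / 2 + 1) - 3 := by
      simpa using phiG_sub_one ((b1 - b2 + 1) / 2 + 1)
    have hexp : phiG ((b1 - b2 + 1) / 2) + -phiG ((b1 - b2 + 1) / 2 + 1) +
        (2 * min ((n : ℤ) - b1 / 2 - 1) ((n : ℤ) - (b2 + 1) / 2) + 1) = 2 * (n : ℤ) - b1 := by
      have hs : b1 = 2 * (b1 / 2) := by omega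
      have ht : b2 + 1 = 2 * ((b2 + 1) / 2) := by omega
      have hrel : (b1 - b2 + 1) / 2 = b1 / 2 - (b2 + 1) / 2 + 1 := by omega
      rcases le_total ((n : ℤ) - b1 / 2 - 1) ((n : ℤ) - (b2 + 1) / 2) with h | h
      · rw [min_eq_left h]; split_ifs at key <;> linarith
      · rw [min_eq_right h]; split_ifs at key <;> linarith
    rw [← hexp, zpow_add₀ (ne_of_gt hq)]
    ring
  · -- b - w = (1,-1) : w = b + e2  (up edge)
    obtain ⟨rfl, rfl⟩ : w1 = b1 - 1 ∧ w2 = b2 + 1 := by omega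
    simp only [wtCol, wtDiag, gaugeE, Prod.mk_sub_mk, Prod.mk.injEq]
    split_ifs <;> try (exfalso; omega)
    have harg : (b1 - 1 - (b2 + 1) + 1) / 2 = (b1 - b2 + 1) / 2 - 1 := by omega
    rw [harg]
    have key := phiG_sub_one ((b1 - b2 + 1) / 2)
    have hexp : phiG ((b1 - b2 + 1) / 2) + -phiG ((b1 - b2 + 1) / 2 - 1) +
        -2 * min ((n : ℤ) - b1 / 2) ((n : ℤ) - (b2 + 1) / 2) = b1 - 2 * (n : ℤ) - 1 := by
      have hs : b1 = 2 * (b1 / 2) := by omega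
      have ht : b2 + 1 = 2 * ((b2 + 1) / 2) := by omega
      have hrel : (b1 - b2 + 1) / 2 = b1 / 2 - (b2 + 1) / 2 + 1 := by omega
      rcases le_total ((n : ℤ) - b1 / 2) ((n : ℤ) - (b2 + 1) / 2) with h | h
      · rw [min_eq_left h]; split_ifs at key <;> linarith
      · rw [min_eq_right h]; split_ifs at key <;> linarith
    rw [← hexp, zpow_add₀ (ne_of_gt hq)]
    ring

lemma zpow_finset_sum {α : Type*} (q : ℝ) (hq : q ≠ 0) (s : Finset α) (f : α → ℤ) :
    q ^ (∑ x ∈ s, f x) = ∏ x ∈ s, q ^ f x := by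
  classical
  induction s using Finset.induction with
  | empty => simp
  | @insert _ _ h ih => rw [Finset.sum_insert h, Finset.prod_insert h, zpow_add₀ hq, ih]

lemma edge_fst_mem {n : ℕ} {p : (ℤ × ℤ) × (ℤ × ℤ)} (hp : p ∈ aztecEdges n) :
    p.1 ∈ aztecBlack n := by
  simp only [aztecEdges, Finset.mem_filter, Finset.mem_product] at hp
  exact hp.1.1

lemma edge_snd_mem {n : ℕ} {p : (ℤ × ℤ) × (ℤ × ℤ)} (hp : p ∈ aztecEdges n) :
    p.2 ∈ aztecWhite n := by
  simp only [aztecEdges, Finset.mem_filter, Finset.mem_product] at hp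
  exact hp.1.2

/-- Total gauge exponent over non-deleted vertices. -/
noncomputable def eSum (n : ℕ) (D : Finset (ℤ × ℤ)) : ℤ :=
  (∑ b ∈ aztecBlack n \ D, gaugeE b) + ∑ w ∈ aztecWhite n \ D, gaugeE w

lemma matching_gauge_sum {n : ℕ} {D : Finset (ℤ × ℤ)} {M : Finset ((ℤ × ℤ) × (ℤ × ℤ))}
    (hM : IsAztecMatching n D M) :
    ∑ p ∈ M, (gaugeE p.1 + gaugeE p.2) = eSum n D := by
  classical
  obtain ⟨hsub, hD, hdegB, hdegW⟩ := hM
  rw [Finset.sum_add_distrib, eSum]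
  congr 1
  · rw [← Finset.sum_fiberwise_of_maps_to' (t := aztecBlack n \ D) (g := fun p => p.1)
      (fun p hp => Finset.mem_sdiff.mpr ⟨edge_fst_mem (hsub hp), (hD p hp).1⟩) gaugeE]
    refine Finset.sum_congr rfl fun b hb => ?_
    rw [Finset.sum_const, hdegB b hb, one_smul]
  · rw [← Finset.sum_fiberwise_of_maps_to' (t := aztecWhite n \ D) (g := fun p => p.2)
      (fun p hp => Finset.mem_sdiff.mpr ⟨edge_snd_mem (hsub hp), (hD p hp).2⟩) gaugeE]
    refine Finset.sum_congr rfl fun w hw => ?_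
    rw [Finset.sum_const, hdegW w hw, one_smul]

lemma aztecZ_col_eq_diag (n : ℕ) (D : Finset (ℤ × ℤ)) (a q : ℝ) (hq : 0 < q) :
    aztecZ n D (wtCol n a q) = q ^ (eSum n D) * aztecZ n D (wtDiag n a q) := by
  classical
  unfold aztecZ
  rw [Finset.mul_sum]
  refine Finset.sum_congr rfl fun M hM => ?_
  have hM' : IsAztecMatching n D M := by
    simp only [aztecMatchings, Finset.mem_filter] at hM
    exact hM.2
  calc ∏ p ∈ M, wtCol n a q p
      = ∏ p ∈ M, (q ^ (gaugeE p.1 + gaugeE p.2) * wtDiag n a q p) :=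
        Finset.prod_congr rfl fun p hp => gauge_wt n a q hq p (hM'.1 hp)
    _ = (∏ p ∈ M, q ^ (gaugeE p.1 + gaugeE p.2)) * ∏ p ∈ M, wtDiag n a q p :=
        Finset.prod_mul_distrib
    _ = q ^ (eSum n D) * ∏ p ∈ M, wtDiag n a q p := by
        rw [← zpow_finset_sum q (ne_of_gt hq), matching_gauge_sum hM']

lemma phiG_neg_nat (i : ℕ) : phiG (-(i : ℤ)) = (i : ℤ) ^ 2 + 2 * i := by
  rw [phiG]
  split_ifs with h
  · have hi0 : (i : ℤ) = 0 := by omega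
    simp [hi0]
  · ring


/-- Relation between the `q^col` and `q^diag` partition functions
with two deleted boundary vertices:
`q^{(i+1)²+j} · Z^diag(i,j,a,n) · Z^col_n(a) = Z^col(i,j,a,n) · Z^diag_n(a)`. -/
theorem qcol_qdiag_partition_relation (a q : ℝ) (ha : 0 < a) (hq : 0 < q)
    (n : ℕ) (hn : 1 ≤ n) (i j : ℕ) (hi : i < n) (hj : j < n) :
    q ^ ((i + 1) ^ 2 + j) *
        aztecZ n {((2 * (n : ℤ) - 2 * i - 1), 2 * (n : ℤ)),
                  ((2 * (n : ℤ)), 2 * (n : ℤ) - 2 * j - 1)} (wtDiag n a q) *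
        aztecZ n ∅ (wtCol n a q) =
      aztecZ n {((2 * (n : ℤ) - 2 * i - 1), 2 * (n : ℤ)),
                ((2 * (n : ℤ)), 2 * (n : ℤ) - 2 * j - 1)} (wtCol n a q) *
        aztecZ n ∅ (wtDiag n a q) := by
  classical
  set w₀ : ℤ × ℤ := ((2 * (n : ℤ) - 2 * i - 1), 2 * (n : ℤ)) with hw₀
  set b₀ : ℤ × ℤ := ((2 * (n : ℤ)), 2 * (n : ℤ) - 2 * j - 1) with hb₀
  set D : Finset (ℤ × ℤ) := {w₀, b₀} with hD
  have hbmem : b₀ ∈ aztecBlack n := by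
    simp only [hb₀, aztecBlack, Finset.mem_filter, Finset.mem_product, Finset.mem_Icc]
    omega
  have hwmem : w₀ ∈ aztecWhite n := by
    simp only [hw₀, aztecWhite, Finset.mem_filter, Finset.mem_product, Finset.mem_Icc]
    omega
  have hBD : aztecBlack n \ D = (aztecBlack n).erase b₀ := by
    ext ⟨x1, x2⟩
    simp only [hD, hw₀, hb₀, Finset.mem_sdiff, Finset.mem_erase, Finset.mem_insert,
      Finset.mem_singleton, aztecBlack, Finset.mem_filter, Finset.mem_product,
      Finset.mem_Icc, Prod.mk.injEq, ne_eq, not_or]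
    omega
  have hWD : aztecWhite n \ D = (aztecWhite n).erase w₀ := by
    ext ⟨x1, x2⟩
    simp only [hD, hw₀, hb₀, Finset.mem_sdiff, Finset.mem_erase, Finset.mem_insert,
      Finset.mem_singleton, aztecWhite, Finset.mem_filter, Finset.mem_product,
      Finset.mem_Icc, Prod.mk.injEq, ne_eq, not_or]
    omega
  have hgb : gaugeE b₀ = -((j : ℤ) + 1) := by
    rw [hb₀, gaugeE]
    simp only
    rw [if_pos (by omega : (2 * (n : ℤ)) % 2 = 0)]
    rw [show (2 * (n : ℤ) - (2 * (n : ℤ) - 2 * j - 1) + 1) / 2 = (j : ℤ) + 1 by omega]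
    rw [phiG, if_pos (by omega : (0:ℤ) ≤ (j : ℤ) + 1)]
  have hgw : gaugeE w₀ = -((i : ℤ) ^ 2 + 2 * i) := by
    rw [hw₀, gaugeE]
    simp only
    rw [if_neg (by omega : ¬ (2 * (n : ℤ) - 2 * i - 1) % 2 = 0)]
    rw [show (2 * (n : ℤ) - 2 * i - 1 - 2 * (n : ℤ) + 1) / 2 = -(i : ℤ) by omega]
    rw [phiG_neg_nat]
  have he : eSum n D = eSum n ∅ + (((i : ℤ) + 1) ^ 2 + j) := by
    unfold eSum
    rw [hBD, hWD, Finset.sum_erase_eq_sub hbmem, Finset.sum_erase_eq_sub hwmem,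
      Finset.sdiff_empty, Finset.sdiff_empty, hgb, hgw]
    ring
  rw [aztecZ_col_eq_diag n D a q hq, aztecZ_col_eq_diag n ∅ a q hq, he,
    zpow_add₀ (ne_of_gt hq),
    show (((i : ℤ) + 1) ^ 2 + j) = (((i + 1) ^ 2 + j : ℕ) : ℤ) by push_cast; ring,
    zpow_natCast]
  ring
end
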